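/- Let (K, d^K) be a boundedly-compact metric space (every closed bounded subset is compact) and fix ρ ∈ K. For r > 0 let K^{(r)} denote the closure of the open ball B(ρ,r) = {x : d^K(ρ,x) < r}. Then the map r ↦ K^{(r)} from (0,∞) to the nonempty compact subsets of K is left-continuous with right-hand limits with respect to the Hausdorff distance in K; moreover, its right-hand limit at r is the closed ball D(ρ,r) = {x : d^K(ρ,x) ≤ r}. That is, hausdorffDist(K^{(s)}, K^{(r)}) → 0 as s ↑ r, and hausdorffDist(K^{(s)}, D(ρ,r)) → 0 as s ↓ r. -/

import Mathlib

open Filter Set Metric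
open scoped Topology

/-- (Lemma: regularity of the restriction of a boundedly-compact metric space.)
In a boundedly-compact (i.e. proper) metric space `K` with a distinguished point `ρ`, the map
`r ↦ K^{(r)} := closure (ball ρ r)` is left-continuous in the Hausdorff distance, and has
right-hand limits; its right-hand limit at `r` is the closed ball `closedBall ρ r`. -/
theorem stmt6 {K : Type*} [MetricSpace K] [ProperSpace K] (ρ : K) (r : ℝ) (hr : 0 < r) :
    Tendsto (fun s => hausdorffDist (closure (ball ρ s)) (closure (ball ρ r)))
      (nhdsWithin r (Set.Iio r)) (𝓝 0) ∧
    Tendsto (fun s => hausdorffDist (closure (ball ρ s)) (closedBall ρ r))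
      (nhdsWithin r (Set.Ioi r)) (𝓝 0) := by
  constructor
  · -- left limit
    rw [Metric.tendsto_nhdsWithin_nhds]
    intro ε hε
    set C := closure (ball ρ r) with hC
    have hCcomp : IsCompact C :=
      (isCompact_closedBall ρ r).of_isClosed_subset isClosed_closure
        (closure_ball_subset_closedBall)
    -- cover C by balls of radius ε/2 centered in ball ρ r
    have hcov : C ⊆ ⋃ x ∈ ball ρ r, ball x (ε / 2) := by
      intro y hy
      obtain ⟨x, hx, hxy⟩ := Metric.mem_closure_iff.mp hy (ε / 2) (by linarith)
      exact mem_biUnion hx (by simpa [mem_ball, dist_comm] using hxy)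
    obtain ⟨F, hFsub, hFfin, hFcov⟩ :=
      hCcomp.elim_finite_subcover_image (fun x _ => isOpen_ball) hcov
    have hρC : ρ ∈ C := subset_closure (mem_ball_self hr)
    have hFne : F.Nonempty := by
      rcases mem_iUnion₂.mp (hFcov hρC) with ⟨x, hx, _⟩
      exact ⟨x, hx⟩
    obtain ⟨b, hbF, hbmax⟩ := Set.Finite.exists_maximalFor (fun x => dist ρ x) F hFfin hFne
    have hbr : dist ρ b < r := by simpa [mem_ball, dist_comm] using hFsub hbF
    refine ⟨r - dist ρ b, by linarith, ?_⟩
    intro s hs hds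
    have hslt : s < r := hs
    have hs0 : dist ρ b < s := by
      rw [Real.dist_eq, abs_of_neg (by linarith)] at hds
      linarith
    have hFs : F ⊆ ball ρ s := by
      intro x hxF
      have hx := hFsub hxF
      have : dist ρ x ≤ dist ρ b := by
        by_contra h
        push_neg at h
        have := hbmax hxF h.le
        linarith
      simpa [mem_ball, dist_comm] using lt_of_le_of_lt this hs0
    have hsubC : closure (ball ρ s) ⊆ C :=
      closure_mono (ball_subset_ball hslt.le)
    have hhd : hausdorffDist (closure (ball ρ s)) C ≤ ε / 2 := by
      refine hausdorffDist_le_of_mem_dist (by linarith) ?_ ?_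
      · intro x hx
        exact ⟨x, hsubC hx, by rw [dist_self]; positivity⟩
      · intro x hx
        rcases mem_iUnion₂.mp (hFcov hx) with ⟨t, htF, hxt⟩
        refine ⟨t, subset_closure (hFs htF), ?_⟩
        rw [dist_comm]
        exact (mem_ball'.mp hxt).le
    rw [Real.dist_eq, sub_zero, abs_of_nonneg hausdorffDist_nonneg]
    linarith
  · -- right limit
    rw [Metric.tendsto_nhdsWithin_nhds]
    intro ε hε
    set D := closedBall ρ r with hD
    have hDne : D.Nonempty := ⟨ρ, mem_closedBall_self hr.le⟩
    set B := {x : K | ε / 2 ≤ infDist x D} ∩ closedBall ρ (r + 1) with hB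
    have hBclosed : IsClosed B :=
      (isClosed_le continuous_const ((continuous_infDist_pt D))).inter isClosed_closedBall
    have hBcomp : IsCompact B :=
      (isCompact_closedBall ρ (r + 1)).of_isClosed_subset hBclosed inter_subset_right
    -- key: ∃ δ > 0, δ ≤ 1 ∧ ∀ x, dist x ρ < r + δ → infDist x D < ε/2
    have key : ∃ δ > 0, δ ≤ 1 ∧ ∀ x : K, dist x ρ < r + δ → infDist x D < ε / 2 := by
      rcases eq_empty_or_nonempty B with hBe | hBne
      · refine ⟨1, one_pos, le_refl _, fun x hx => ?_⟩
        by_contra h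
        push_neg at h
        have : x ∈ B := ⟨h, by simpa [mem_closedBall] using hx.le⟩
        simp [hBe] at this
      · obtain ⟨z, hzB, hzmin⟩ := hBcomp.exists_isMinOn hBne
          (continuous_id.dist continuous_const).continuousOn
        have hzmin' : ∀ x ∈ B, dist z ρ ≤ dist x ρ := fun x hx => hzmin hx
        have hzD : z ∉ D := fun h => by
          have h1 := hzB.1
          simp only [mem_setOf_eq, infDist_zero_of_mem h] at h1
          linarith
        have hm : r < dist z ρ := by
          by_contra h
          push_neg at h
          exact hzD (mem_closedBall.mpr h)
        refine ⟨min (dist z ρ - r) 1, lt_min (by linarith) one_pos, min_le_right _ _,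
          fun x hx => ?_⟩
        by_contra h
        push_neg at h
        have hle1 : min (dist z ρ - r) 1 ≤ 1 := min_le_right _ _
        have hle2 : min (dist z ρ - r) 1 ≤ dist z ρ - r := min_le_left _ _
        have hx1 : x ∈ closedBall ρ (r + 1) := mem_closedBall.mpr (by linarith)
        have hxB : x ∈ B := ⟨h, hx1⟩
        have := hzmin' x hxB
        linarith
    obtain ⟨δ, hδpos, hδ1, hδ⟩ := key
    refine ⟨δ, hδpos, ?_⟩
    intro s hs hds
    have hsr : r < s := hs
    have hsδ : s < r + δ := by
      rw [Real.dist_eq, abs_of_pos (by linarith)] at hds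
      linarith
    have hhd : hausdorffDist (closure (ball ρ s)) D ≤ ε / 2 := by
      refine hausdorffDist_le_of_mem_dist (by linarith) ?_ ?_
      · intro x hx
        have hxs : dist x ρ ≤ s := by
          simpa [mem_closedBall] using closure_ball_subset_closedBall hx
        have : infDist x D < ε / 2 := hδ x (lt_of_le_of_lt hxs hsδ)
        obtain ⟨y, hyD, hxy⟩ := (infDist_lt_iff hDne).mp this
        exact ⟨y, hyD, hxy.le⟩
      · intro x hx
        refine ⟨x, subset_closure ?_, by rw [dist_self]; positivity⟩
        have : dist x ρ ≤ r := hx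
        simpa [mem_ball] using lt_of_le_of_lt this hsr
    rw [Real.dist_eq, sub_zero, abs_of_nonneg hausdorffDist_nonneg]
    linarith
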